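/- Let M_1, …, M_m : ℝ^n → ℝ^n be paracontractions with respect to a norm ‖·‖ on ℝ^n, let y* be a common fixed point of M_1, …, M_m, and let S(1), …, S(q) be m × m stochastic matrices with entries s_ij(t). For arbitrary v_1(0), …, v_m(0) ∈ ℝ^n define v_i(t+1) = ∑_{j=1}^m s_ij(t+1) M_j(v_j(t)) for 0 ≤ t < q, and define Φ(t,τ) = S(t)S(t−1)⋯S(τ+1) for 0 ≤ τ < t ≤ q with Φ(t,t) = I, writing φ_ij(t,τ) for its entries. Fix i ∈ {1,…,m}. If there exist t with 0 ≤ t < q and j ∈ {1,…,m} such that φ_ij(q,t) > 0 and M_j(v_j(t)) ≠ v_j(t), then ‖v_i(q) − y*‖ < ∑_{p=1}^m φ_ip(q,0) ‖v_p(0) − y*‖. -/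

import Mathlib

open Filter Topology Finset
open scoped ENNReal

def IsNormOn {E : Type*} [AddCommGroup E] [Module ℝ E] (N : E → ℝ) : Prop :=
  (∀ x, N x = 0 ↔ x = 0) ∧
  (∀ (c : ℝ) (x : E), N (c • x) = |c| * N x) ∧
  (∀ x y : E, N (x + y) ≤ N x + N y)

def IsParacontraction {E : Type*} [AddCommGroup E] [Module ℝ E] [TopologicalSpace E]
    (N : E → ℝ) (P : E → E) : Prop :=
  Continuous P ∧ ∀ x y : E, P x ≠ x → P y = y → N (P x - y) < N (x - y)

def QuasiNonexpansive {E : Type*} [AddCommGroup E] (N : E → ℝ) (P : E → E) : Prop :=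
  ∀ x y : E, P y = y → N (P x - y) ≤ N (x - y)

noncomputable def pnorm {n : ℕ} (p : ℝ) (x : Fin n → ℝ) : ℝ :=
  (∑ i, |x i| ^ p) ^ (1 / p)

noncomputable def pnormE {n : ℕ} (p : ℝ≥0∞) (x : Fin n → ℝ) : ℝ :=
  if p = ⊤ then ⨆ i, |x i| else (∑ i, |x i| ^ p.toReal) ^ (1 / p.toReal)

noncomputable def mixed22 {m n : ℕ} (x : Fin m → Fin n → ℝ) : ℝ :=
  pnorm 2 (fun i => pnorm 2 (x i))

noncomputable def mixedPInf {m n : ℕ} (p : ℝ) (x : Fin m → Fin n → ℝ) : ℝ :=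
  ⨆ i, pnorm p (x i)

noncomputable def mixedEInf {m n : ℕ} (p : ℝ≥0∞) (x : Fin m → Fin n → ℝ) : ℝ :=
  ⨆ i, pnormE p (x i)

def IsStochastic {m : ℕ} (S : Matrix (Fin m) (Fin m) ℝ) : Prop :=
  (∀ i j, 0 ≤ S i j) ∧ ∀ i, ∑ j, S i j = 1

def IsDoublyStochastic {m : ℕ} (S : Matrix (Fin m) (Fin m) ℝ) : Prop :=
  IsStochastic S ∧ ∀ j, ∑ i, S i j = 1

def kron {m n : ℕ} (S : Matrix (Fin m) (Fin m) ℝ) (x : Fin m → Fin n → ℝ) :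
    Fin m → Fin n → ℝ :=
  fun i => ∑ j, S i j • x j

def stackMap {m n : ℕ} (M : Fin m → (Fin n → ℝ) → (Fin n → ℝ)) :
    (Fin m → Fin n → ℝ) → (Fin m → Fin n → ℝ) :=
  fun x i => M i (x i)

def consensusSet (m n : ℕ) : Set (Fin m → Fin n → ℝ) :=
  {x | ∀ i j : Fin m, x i = x j}

def StronglyConnected {V : Type*} (G : V → V → Prop) : Prop :=
  ∀ i j : V, Relation.ReflTransGen G i j

def graphComp {V : Type*} (Gq Gp : V → V → Prop) : V → V → Prop :=
  fun i j => ∃ k, Gp i k ∧ Gq k j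

def composeChain {m : ℕ} (G : ℕ → Fin m → Fin m → Prop) (a : ℕ) :
    ℕ → (Fin m → Fin m → Prop)
  | 0 => G a
  | k + 1 => graphComp (G (a + (k + 1))) (composeChain G a k)

def mapChain {α : Type*} (F : ℕ → α → α) : ℕ → α → α
  | 0 => id
  | k + 1 => F (k + 1) ∘ mapChain F k

noncomputable def Phi {m : ℕ} (S : ℕ → Matrix (Fin m) (Fin m) ℝ) (τ t : ℕ) :
    Matrix (Fin m) (Fin m) ℝ :=
  (List.range (t - τ)).foldl (fun A k => S (τ + k + 1) * A) 1


lemma Phi_self {m : ℕ} (S : ℕ → Matrix (Fin m) (Fin m) ℝ) (a : ℕ) : Phi S a a = 1 := by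
  simp [Phi]

lemma Phi_right {m : ℕ} (S : ℕ → Matrix (Fin m) (Fin m) ℝ) {a b : ℕ} (h : a ≤ b) :
    Phi S a (b + 1) = S (b + 1) * Phi S a b := by
  have h1 : b + 1 - a = (b - a) + 1 := by omega
  have h2 : a + (b - a) + 1 = b + 1 := by omega
  rw [Phi, h1, List.range_succ, List.foldl_append, List.foldl_cons, List.foldl_nil, h2]
  rfl

lemma Phi_comp {m : ℕ} (S : ℕ → Matrix (Fin m) (Fin m) ℝ) :
    ∀ (d a b : ℕ), a ≤ b → Phi S b (b + d) * Phi S a b = Phi S a (b + d) := by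
  intro d
  induction d with
  | zero => intro a b _; simp [Phi_self]
  | succ d ih =>
      intro a b h
      have e : b + (d + 1) = (b + d) + 1 := by omega
      rw [e, Phi_right S (by omega : b ≤ b + d), Phi_right S (by omega : a ≤ b + d),
        mul_assoc, ih a b h]

theorem stmt17 {n m : ℕ} (N : (Fin n → ℝ) → ℝ) (hN : IsNormOn N)
    (M : Fin m → (Fin n → ℝ) → (Fin n → ℝ))
    (hpc : ∀ i, IsParacontraction N (M i))
    (ystar : Fin n → ℝ) (hy : ∀ i, M i ystar = ystar)
    (q : ℕ) (S : ℕ → Matrix (Fin m) (Fin m) ℝ)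
    (hS : ∀ t, 1 ≤ t → t ≤ q → IsStochastic (S t))
    (v : ℕ → Fin m → Fin n → ℝ)
    (hv : ∀ t, t < q → ∀ i, v (t + 1) i = ∑ j, S (t + 1) i j • M j (v t j))
    (i : Fin m) (t : ℕ) (ht : t < q) (j : Fin m)
    (hφpos : 0 < Phi S t q i j) (hne : M j (v t j) ≠ v t j) :
    N (v q i - ystar) < ∑ p, Phi S 0 q i p * N (v 0 p - ystar)  := by
  classical
  have Nsum : ∀ (s : Finset (Fin m)) (f : Fin m → Fin n → ℝ),
      N (∑ p ∈ s, f p) ≤ ∑ p ∈ s, N (f p) := by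
    intro s f
    induction s using Finset.induction with
    | empty => simp [(hN.1 0).mpr rfl]
    | insert _ _ h ih =>
        rw [Finset.sum_insert h, Finset.sum_insert h]
        exact le_trans (hN.2.2 _ _) (by linarith)
  have quasi : ∀ (p : Fin m) (x : Fin n → ℝ), N (M p x - ystar) ≤ N (x - ystar) := by
    intro p x
    by_cases h : M p x = x
    · rw [h]
    · exact le_of_lt ((hpc p).2 x ystar h (hy p))
  have stepLe' : ∀ s, s < q → ∀ k,
      N (v (s + 1) k - ystar) ≤ ∑ p, S (s + 1) k p * N (M p (v s p) - ystar) := by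
    intro s hs k
    obtain ⟨hpos, hrow⟩ := hS (s + 1) (by omega) (by omega)
    have key : v (s + 1) k - ystar = ∑ p, S (s + 1) k p • (M p (v s p) - ystar) := by
      rw [hv s hs k]
      simp only [smul_sub]
      rw [Finset.sum_sub_distrib, ← Finset.sum_smul, hrow k, one_smul]
    rw [key]
    refine le_trans (Nsum _ _) (le_of_eq (Finset.sum_congr rfl fun p _ => ?_))
    rw [hN.2.1, abs_of_nonneg (hpos k p)]
  have stepLe : ∀ s, s < q → ∀ k,
      N (v (s + 1) k - ystar) ≤ ∑ p, S (s + 1) k p * N (v s p - ystar) := by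
    intro s hs k
    refine le_trans (stepLe' s hs k) (Finset.sum_le_sum fun p _ => ?_)
    exact mul_le_mul_of_nonneg_left (quasi p _) ((hS (s + 1) (by omega) (by omega)).1 k p)
  have PhiNonnegD : ∀ d a, a + d ≤ q → ∀ k p, 0 ≤ Phi S a (a + d) k p := by
    intro d
    induction d with
    | zero =>
        intro a _ k p
        rcases eq_or_ne k p with h | h <;> simp [Phi_self, Matrix.one_apply, h]
    | succ d ih =>
        intro a h k p
        have e : a + (d + 1) = (a + d) + 1 := by omega
        rw [e, Phi_right S (by omega : a ≤ a + d), Matrix.mul_apply]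
        refine Finset.sum_nonneg fun r _ => mul_nonneg ?_ (ih a (by omega) r p)
        exact (hS ((a + d) + 1) (by omega) (by omega)).1 k r
  have PhiNonneg : ∀ a b, a ≤ b → b ≤ q → ∀ k p, 0 ≤ Phi S a b k p := by
    intro a b hab hbq
    obtain ⟨d, rfl⟩ := Nat.exists_eq_add_of_le hab
    exact PhiNonnegD d a hbq
  have swapEq : ∀ (a b : ℕ), a ≤ b → ∀ (k : Fin m) (c : Fin m → ℝ),
      ∑ r, S (b + 1) k r * (∑ p, Phi S a b r p * c p)
        = ∑ p, Phi S a (b + 1) k p * c p := by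
    intro a b hab k c
    rw [Phi_right S hab]
    simp only [Matrix.mul_apply, Finset.sum_mul, Finset.mul_sum, mul_assoc]
    rw [Finset.sum_comm]
  have lemBD : ∀ d a, a + d ≤ q → ∀ k,
      N (v (a + d) k - ystar) ≤ ∑ p, Phi S a (a + d) k p * N (v a p - ystar) := by
    intro d
    induction d with
    | zero =>
        intro a _ k
        rw [Nat.add_zero, Phi_self]
        simp [Matrix.one_apply, ite_mul]
    | succ d ih =>
        intro a h k
        have e : a + (d + 1) = (a + d) + 1 := by omega
        rw [e]
        calc N (v ((a + d) + 1) k - ystar)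
            ≤ ∑ r, S ((a + d) + 1) k r * N (v (a + d) r - ystar) :=
              stepLe (a + d) (by omega) k
          _ ≤ ∑ r, S ((a + d) + 1) k r * (∑ p, Phi S a (a + d) r p * N (v a p - ystar)) :=
              Finset.sum_le_sum fun r _ => mul_le_mul_of_nonneg_left (ih a (by omega) r)
                ((hS ((a + d) + 1) (by omega) (by omega)).1 k r)
          _ = ∑ p, Phi S a ((a + d) + 1) k p * N (v a p - ystar) :=
              swapEq a (a + d) (by omega) k _
  have lemB : ∀ a b, a ≤ b → b ≤ q → ∀ k,
      N (v b k - ystar) ≤ ∑ p, Phi S a b k p * N (v a p - ystar) := by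
    intro a b hab hbq
    obtain ⟨d, rfl⟩ := Nat.exists_eq_add_of_le hab
    exact lemBD d a hbq
  have lemC : ∀ d, t + 1 + d ≤ q → ∀ k, 0 < Phi S t (t + 1 + d) k j →
      N (v (t + 1 + d) k - ystar) < ∑ p, Phi S t (t + 1 + d) k p * N (v t p - ystar) := by
    intro d
    induction d with
    | zero =>
        intro h k hk
        have ePhi : Phi S t (t + 1) = S (t + 1) := by
          rw [Phi_right S le_rfl, Phi_self, mul_one]
        rw [ePhi] at hk ⊢
        refine lt_of_le_of_lt (stepLe' t (by omega) k) (Finset.sum_lt_sum ?_ ?_)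
        · intro p _
          exact mul_le_mul_of_nonneg_left (quasi p _) ((hS (t + 1) (by omega) (by omega)).1 k p)
        · exact ⟨j, Finset.mem_univ j,
            mul_lt_mul_of_pos_left ((hpc j).2 (v t j) ystar hne (hy j)) hk⟩
    | succ d ih =>
        intro h k hk
        have e : t + 1 + (d + 1) = (t + 1 + d) + 1 := by omega
        rw [e] at hk ⊢
        rw [Phi_right S (by omega : t ≤ t + 1 + d), Matrix.mul_apply] at hk
        have hsum : ∑ r : Fin m, (0 : ℝ)
            < ∑ r, S ((t + 1 + d) + 1) k r * Phi S t (t + 1 + d) r j := by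
          simpa using hk
        obtain ⟨k0, -, hk0⟩ := Finset.exists_lt_of_sum_lt hsum
        have hSnn : 0 ≤ S ((t + 1 + d) + 1) k k0 :=
          (hS ((t + 1 + d) + 1) (by omega) (by omega)).1 k k0
        have hPnn : 0 ≤ Phi S t (t + 1 + d) k0 j :=
          PhiNonneg t (t + 1 + d) (by omega) (by omega) k0 j
        have hSpos : 0 < S ((t + 1 + d) + 1) k k0 := by
          rcases lt_or_eq_of_le hSnn with h' | h'
          · exact h'
          · exfalso; rw [← h', zero_mul] at hk0; exact lt_irrefl 0 hk0
        have hPpos : 0 < Phi S t (t + 1 + d) k0 j := by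
          rcases lt_or_eq_of_le hPnn with h' | h'
          · exact h'
          · exfalso; rw [← h', mul_zero] at hk0; exact lt_irrefl 0 hk0
        calc N (v ((t + 1 + d) + 1) k - ystar)
            ≤ ∑ r, S ((t + 1 + d) + 1) k r * N (v (t + 1 + d) r - ystar) :=
              stepLe (t + 1 + d) (by omega) k
          _ < ∑ r, S ((t + 1 + d) + 1) k r *
                (∑ p, Phi S t (t + 1 + d) r p * N (v t p - ystar)) := by
              refine Finset.sum_lt_sum (fun r _ => ?_)
                ⟨k0, Finset.mem_univ k0, mul_lt_mul_of_pos_left (ih (by omega) k0 hPpos) hSpos⟩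
              exact mul_le_mul_of_nonneg_left (lemB t (t + 1 + d) (by omega) (by omega) r)
                ((hS ((t + 1 + d) + 1) (by omega) (by omega)).1 k r)
          _ = ∑ p, Phi S t ((t + 1 + d) + 1) k p * N (v t p - ystar) :=
              swapEq t (t + 1 + d) (by omega) k _
  have eq : q = t + 1 + (q - t - 1) := by omega
  have main : N (v q i - ystar) < ∑ p, Phi S t q i p * N (v t p - ystar) := by
    rw [eq] at hφpos ⊢
    exact lemC (q - t - 1) (by omega) i hφpos
  have hcomp : Phi S t q * Phi S 0 t = Phi S 0 q := by
    have := Phi_comp S (q - t) 0 t (by omega)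
    rwa [show t + (q - t) = q from by omega] at this
  calc N (v q i - ystar)
      < ∑ p, Phi S t q i p * N (v t p - ystar) := main
    _ ≤ ∑ p, Phi S t q i p * (∑ r, Phi S 0 t p r * N (v 0 r - ystar)) :=
        Finset.sum_le_sum fun p _ => mul_le_mul_of_nonneg_left
          (lemB 0 t (by omega) (by omega) p) (PhiNonneg t q (by omega) le_rfl i p)
    _ = ∑ r, Phi S 0 q i r * N (v 0 r - ystar) := by
        rw [← hcomp]
        simp only [Matrix.mul_apply, Finset.sum_mul, Finset.mul_sum, mul_assoc]
        rw [Finset.sum_comm]
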